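/- arXiv:2109.06811 — 2 statements merged into one kernel-verified Lean document; each statement's English description precedes it below -/
import Mathlib

section
/- Let f be a natural number, let R be a finite set of replicas, let F ⊆ R with |F| = 2f, let Faulty ⊆ R with |F ∩ Faulty| ≤ f, let D be a type of dependencies, and let S, S' : R → Finset D be report assignments with S' x = S x for all x ∈ F \ Faulty. Suppose S' is valid, meaning that for every dependency e, the number of x ∈ F with e ∈ S' x is either 0 or at least f+1. Then for every dependency d such that |{x ∈ F : d ∈ S x}| ≥ f+1, it holds that |{x ∈ F : d ∈ S' x}| ≥ f+1; in particular d belongs to the union of the reports in S' over F. -/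
/-- A manipulated but valid fast-path certificate preserves committed
dependencies: if the honest reports `S` contain a dependency `d` at least
`f+1` times over the fast-path quorum `F` (of size `2f`, at most `f` of whose
members are faulty), then any valid manipulated reports `S'` (agreeing with
`S` on correct members, and in which every occurring dependency is reported
`0` or at least `f+1` times) also contain `d` at least `f+1` times; in
particular `d` belongs to the union of the reports in `S'` over `F`. -/
theorem manipulated_fpc_preserves_dependencies {α : Type*} [DecidableEq α]
    {D : Type*} [DecidableEq D] (f : ℕ)
    (R F Faulty : Finset α) (hF : F ⊆ R) (hFcard : F.card = 2 * f)
    (hFaultyCard : (F ∩ Faulty).card ≤ f)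
    (S S' : α → Finset D)
    (hAgree : ∀ x ∈ F \ Faulty, S' x = S x)
    (hValid : ∀ e : D,
      (F.filter (fun x => e ∈ S' x)).card = 0 ∨
      f + 1 ≤ (F.filter (fun x => e ∈ S' x)).card) :
    ∀ d : D, f + 1 ≤ (F.filter (fun x => d ∈ S x)).card →
      f + 1 ≤ (F.filter (fun x => d ∈ S' x)).card ∧ d ∈ F.biUnion S' := by
  intro d hd
  -- find a correct member of F reporting d
  have hsub : F.filter (fun x => d ∈ S x) ∩ Faulty ⊆ F ∩ Faulty :=
    Finset.inter_subset_inter (Finset.filter_subset _ _) le_rfl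
  have hlt : ((F.filter (fun x => d ∈ S x)) ∩ Faulty).card
      < (F.filter (fun x => d ∈ S x)).card :=
    lt_of_le_of_lt (le_trans (Finset.card_le_card hsub) hFaultyCard)
      (Nat.lt_of_lt_of_le (Nat.lt_succ_self f) hd)
  obtain ⟨x, hxT, hxnF⟩ : ∃ x ∈ F.filter (fun x => d ∈ S x), x ∉ Faulty := by
    by_contra h
    push_neg at h
    exact absurd (Finset.card_le_card (fun y hy =>
      Finset.mem_inter.mpr ⟨hy, h y hy⟩)) (not_le.mpr hlt)
  rw [Finset.mem_filter] at hxT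
  have hx' : d ∈ S' x := by
    rw [hAgree x (Finset.mem_sdiff.mpr ⟨hxT.1, hxnF⟩)]; exact hxT.2
  have hne : (F.filter (fun x => d ∈ S' x)).card ≠ 0 := by
    rw [Finset.card_ne_zero, Finset.filter_nonempty_iff]
    exact ⟨x, hxT.1, hx'⟩
  have hge := (hValid d).resolve_left hne
  exact ⟨hge, Finset.mem_biUnion.mpr ⟨x, hxT.1, hx'⟩⟩
end

section
/- Let f be a natural number, let R be a finite set of replicas, let F ⊆ R with |F| = 2f, let Faulty ⊆ R with |F ∩ Faulty| ≤ f, let D be a type of dependencies, and let S, S' : R → Finset D be report assignments with S' x = S x for all x ∈ F \ Faulty. Suppose S' is valid, meaning that for every dependency e, the number of x ∈ F with e ∈ S' x is either 0 or at least f+1. Then for every dependency d such that d ∉ S x for all x ∈ F \ Faulty, it holds that d ∉ S' x for all x ∈ F; that is, a dependency never reported by any correct member of F cannot appear in any valid (possibly manipulated) certificate. -/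
/-- A dependency never reported by any correct member of the fast-path quorum
`F` cannot appear in any valid (possibly manipulated) certificate: it could be
reported at most `f` times, which validity forces down to zero. -/
theorem manipulated_fpc_no_fabricated_dependencies {α : Type*} [DecidableEq α]
    {D : Type*} [DecidableEq D] (f : ℕ)
    (R F Faulty : Finset α) (hF : F ⊆ R) (hFcard : F.card = 2 * f)
    (hFaultyCard : (F ∩ Faulty).card ≤ f)
    (S S' : α → Finset D)
    (hAgree : ∀ x ∈ F \ Faulty, S' x = S x)
    (hValid : ∀ e : D,
      (F.filter (fun x => e ∈ S' x)).card = 0 ∨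
      f + 1 ≤ (F.filter (fun x => e ∈ S' x)).card) :
    ∀ d : D, (∀ x ∈ F \ Faulty, d ∉ S x) → ∀ x ∈ F, d ∉ S' x := by
  intro d hd x hx hdx
  have hsub : F.filter (fun x => d ∈ S' x) ⊆ F ∩ Faulty := by
    intro y hy
    simp only [Finset.mem_filter] at hy
    rcases hy with ⟨hyF, hyd⟩
    by_cases hyFault : y ∈ Faulty
    · exact Finset.mem_inter.mpr ⟨hyF, hyFault⟩
    · exact absurd (hAgree y (Finset.mem_sdiff.mpr ⟨hyF, hyFault⟩) ▸ hyd)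
        (hd y (Finset.mem_sdiff.mpr ⟨hyF, hyFault⟩))
  have hle := (Finset.card_le_card hsub).trans hFaultyCard
  rcases hValid d with h0 | h1
  · have : x ∈ F.filter (fun x => d ∈ S' x) := Finset.mem_filter.mpr ⟨hx, hdx⟩
    simp [Finset.card_eq_zero] at h0
    exact absurd this (by simp [h0]; exact @h0 x)
  · omega
end
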